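/- arXiv:2501.11437 — 2 statements merged into one kernel-verified Lean document; each statement's English description precedes it below -/
import Mathlib

section
/- Let n ≥ 3. Suppose there exists a weighted spherical t-design of generalized corner-vector type on S^{n-1} given by data (a_i, s_i, W_i), i = 1,...,k, such that s_i ≤ n-2 for every index i. Then t ≤ 2n-1. -/
open MeasureTheory

/-- The generalized corner vector `v_{a,s} = (a^2+s)^{-1/2} (a,1,...,1,0,...,0)`
(with `s` ones after the first coordinate `a`) in `ℝ^n`. -/
noncomputable def cornerVec (n : ℕ) (a : ℝ) (s : ℕ) : EuclideanSpace ℝ (Fin n) :=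
  WithLp.toLp 2 fun (i : Fin n) => (Real.sqrt (a ^ 2 + s))⁻¹ *
    (if (i : ℕ) = 0 then a else if (i : ℕ) ≤ s then 1 else 0)

/-- The orbit `v_{a,s}^{B_n}` of the generalized corner vector under the
hyperoctahedral group (coordinate permutations and sign changes). -/
noncomputable def cornerOrbit (n : ℕ) (a : ℝ) (s : ℕ) : Finset (EuclideanSpace ℝ (Fin n)) :=
  @Finset.image _ _ (Classical.decEq _)
    (fun p : Equiv.Perm (Fin n) × (Fin n → Bool) =>
      (WithLp.toLp 2 fun i => (if p.2 i then (-1 : ℝ) else 1) * cornerVec n a s (p.1 i) :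
        EuclideanSpace ℝ (Fin n)))
    Finset.univ

/-- The average `(1/|S^{n-1}|) ∫_{S^{n-1}} f dρ` of a polynomial over the unit sphere,
with respect to the surface ((n-1)-dimensional Hausdorff) measure. -/
noncomputable def sphereAvg (n : ℕ) (f : MvPolynomial (Fin n) ℝ) : ℝ :=
  ⨍ x in Metric.sphere (0 : EuclideanSpace ℝ (Fin n)) 1,
    MvPolynomial.eval (fun i => x i) f ∂ μH[(n : ℝ) - 1]

/-- The sum `Σ_{x ∈ v_{a,s}^{B_n}} f(x)`. -/
noncomputable def orbitSum (n : ℕ) (a : ℝ) (s : ℕ) (f : MvPolynomial (Fin n) ℝ) : ℝ :=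
  ∑ y ∈ cornerOrbit n a s, MvPolynomial.eval (fun i => y i) f

/-- A weighted spherical `t`-design of generalized corner-vector type on `S^{n-1}`:
the spherical average of every polynomial of total degree at most `t` equals the
weighted sum over the orbits `v_{a_i,s_i}^{B_n}` with weights `W_i`. -/
def isDesign (n t k : ℕ) (a : Fin k → ℝ) (s : Fin k → ℕ) (W : Fin k → ℝ) : Prop :=
  ∀ f : MvPolynomial (Fin n) ℝ, f.totalDegree ≤ t →
    sphereAvg n f = ∑ i, W i * orbitSum n (a i) (s i) f

/-! ### Auxiliary lemmas -/

/-- The Euclidean unit sphere in `ℝ^m` is null for the `m`-dimensional Hausdorff measure. -/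
lemma aux_euclid_sphere_null (m : ℕ) (hm : 1 ≤ m) :
    μH[(m:ℝ)] (Metric.sphere (0 : EuclideanSpace ℝ (Fin m)) 1) = 0 := by
  set S := Metric.sphere (0 : EuclideanSpace ℝ (Fin m)) 1 with hS
  have hd : (0:ℝ) ≤ (m:ℝ) := Nat.cast_nonneg m
  have hK := PiLp.antilipschitzWith_ofLp 2 (fun _ : Fin m => ℝ)
  have h1 := hK.le_hausdorffMeasure_image hd S
  have himg : (@WithLp.ofLp 2 (Fin m → ℝ)) '' S
      = (@WithLp.toLp 2 (Fin m → ℝ)) ⁻¹' S := by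
    ext x
    constructor
    · rintro ⟨y, hy, rfl⟩
      simpa using hy
    · intro hx
      exact ⟨WithLp.toLp 2 x, hx, rfl⟩
  have hpi : (μH[(m:ℝ)] : Measure (Fin m → ℝ)) = volume := by
    have := hausdorffMeasure_pi_real (ι := Fin m)
    simpa using this
  have hvol : (volume : Measure (Fin m → ℝ))
      ((@WithLp.toLp 2 (Fin m → ℝ)) ⁻¹' S) = volume S := by
    exact (PiLp.volume_preserving_toLp (Fin m)).measure_preimage
      (Metric.isClosed_sphere.measurableSet).nullMeasurableSet
  have hzero : (volume : Measure (EuclideanSpace ℝ (Fin m))) S = 0 := by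
    have : Nonempty (Fin m) := ⟨⟨0, hm⟩⟩
    exact Measure.addHaar_sphere volume 0 1
  rw [himg, hpi, hvol, hzero, mul_zero] at h1
  exact le_antisymm h1 zero_le

/-- Inserting a zero coordinate, as a map of Euclidean spaces. -/
noncomputable def auxPhi (m : ℕ) (j : Fin (m+1)) :
    EuclideanSpace ℝ (Fin m) → EuclideanSpace ℝ (Fin (m+1)) :=
  fun x => WithLp.toLp 2 (j.insertNth (0:ℝ) (WithLp.ofLp x))

lemma auxPhi_isometry (m : ℕ) (j : Fin (m+1)) : Isometry (auxPhi m j) := by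
  apply Isometry.of_dist_eq
  intro x y
  rw [EuclideanSpace.dist_eq x y, EuclideanSpace.dist_eq (auxPhi m j x) (auxPhi m j y)]
  congr 1
  rw [Fin.sum_univ_succAbove _ j]
  simp [auxPhi, Fin.insertNth_apply_same, Fin.insertNth_apply_succAbove]

lemma auxPhi_image_sphere (m : ℕ) (j : Fin (m+1)) :
    auxPhi m j '' (Metric.sphere 0 1)
    = Metric.sphere (0 : EuclideanSpace ℝ (Fin (m+1))) 1 ∩ {y | y j = 0} := by
  ext y
  constructor
  · rintro ⟨x, hx, rfl⟩
    rw [mem_sphere_zero_iff_norm] at hx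
    constructor
    · show auxPhi m j x ∈ Metric.sphere (0 : EuclideanSpace ℝ (Fin (m+1))) 1
      rw [mem_sphere_zero_iff_norm, EuclideanSpace.norm_eq]
      rw [EuclideanSpace.norm_eq] at hx
      rw [Fin.sum_univ_succAbove _ j]
      simpa [auxPhi, Fin.insertNth_apply_same, Fin.insertNth_apply_succAbove] using hx
    · simp [auxPhi, Fin.insertNth_apply_same]
  · rintro ⟨hy, hy0⟩
    simp only [Set.mem_setOf_eq] at hy0
    refine ⟨(WithLp.toLp 2 (fun i => y (j.succAbove i)) : EuclideanSpace ℝ (Fin m)), ?_, ?_⟩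
    · rw [mem_sphere_zero_iff_norm] at hy ⊢
      rw [EuclideanSpace.norm_eq] at hy ⊢
      rw [Fin.sum_univ_succAbove _ j, hy0] at hy
      simpa using hy
    · show WithLp.toLp 2 (j.insertNth 0 (j.removeNth y.ofLp)) = y
      rw [← hy0]
      exact congrArg (WithLp.toLp 2) (Fin.insertNth_self_removeNth j y.ofLp)

/-- A coordinate hyperplane slice of the unit sphere in `ℝ^{m+1}` is null for
the `m`-dimensional Hausdorff measure. -/
lemma aux_slice_null (m : ℕ) (hm : 1 ≤ m) (j : Fin (m+1)) :
    μH[(m:ℝ)] (Metric.sphere (0 : EuclideanSpace ℝ (Fin (m+1))) 1 ∩ {y | y j = 0}) = 0 := by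
  rw [← auxPhi_image_sphere m j,
    (auxPhi_isometry m j).hausdorffMeasure_image (Or.inl (Nat.cast_nonneg m))]
  exact aux_euclid_sphere_null m hm

/-- If every `s_i ≤ n-2`, the degree is at most `2n-1`. -/
theorem degree_bound_of_s_le (n t k : ℕ) (hn : 3 ≤ n) (hk : 1 ≤ k)
    (a : Fin k → ℝ) (s : Fin k → ℕ) (W : Fin k → ℝ)
    (ha : ∀ i, 0 < a i) (hs : ∀ i, s i ≤ n - 1) (hW : ∀ i, 0 < W i)
    (hsmall : ∀ i, s i ≤ n - 2)
    (hd : isDesign n t k a s W) :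
    t ≤ 2 * n - 1 := by
  by_contra hcon
  push_neg at hcon
  have ht : 2 * n ≤ t := by omega
  classical
  -- the two test polynomials
  set H : MvPolynomial (Fin n) ℝ := (∑ i : Fin n, MvPolynomial.X i ^ 2) ^ n with hH
  set G : MvPolynomial (Fin n) ℝ := ∏ i : Fin n, MvPolynomial.X i ^ 2 with hG
  have hHdeg : H.totalDegree ≤ t := by
    refine le_trans ?_ ht
    refine le_trans (MvPolynomial.totalDegree_pow _ _) ?_
    have h2 : (∑ i : Fin n, MvPolynomial.X (R := ℝ) i ^ 2).totalDegree ≤ 2 := by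
      refine le_trans (MvPolynomial.totalDegree_finset_sum _ _) ?_
      refine Finset.sup_le fun i _ => ?_
      rw [MvPolynomial.totalDegree_X_pow]
    calc n * (∑ i : Fin n, MvPolynomial.X (R := ℝ) i ^ 2).totalDegree
        ≤ n * 2 := Nat.mul_le_mul_left n h2
      _ = 2 * n := Nat.mul_comm n 2
  have hGdeg : G.totalDegree ≤ t := by
    refine le_trans ?_ ht
    refine le_trans (MvPolynomial.totalDegree_finset_prod _ _) ?_
    calc ∑ _i : Fin n, (MvPolynomial.X (R := ℝ) _i ^ 2).totalDegree
        ≤ ∑ _i : Fin n, 2 := by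
          refine Finset.sum_le_sum fun i _ => ?_
          rw [MvPolynomial.totalDegree_X_pow]
      _ = 2 * n := by simp [Nat.mul_comm]
  -- evaluations
  have hevalH : ∀ y : EuclideanSpace ℝ (Fin n),
      MvPolynomial.eval (fun i => y i) H = (∑ i : Fin n, (y i) ^ 2) ^ n := by
    intro y; simp [hH]
  have hevalG : ∀ y : EuclideanSpace ℝ (Fin n),
      MvPolynomial.eval (fun i => y i) G = ∏ i : Fin n, (y i) ^ 2 := by
    intro y; simp [hG]
  -- orbit facts
  have hmem : ∀ i : Fin k, cornerVec n (a i) (s i) ∈ cornerOrbit n (a i) (s i) := by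
    intro i
    refine (@Finset.mem_image _ _ (Classical.decEq _) _ _ _).mpr ⟨(1, fun _ => false), Finset.mem_univ _, ?_⟩
    ext j; simp
  have hzeroCoord : ∀ i : Fin k, ∀ y ∈ cornerOrbit n (a i) (s i), ∃ j, y j = 0 := by
    intro i y hy
    obtain ⟨p, -, rfl⟩ := (@Finset.mem_image _ _ (Classical.decEq _) _ _ _).mp hy
    refine ⟨p.1.symm ⟨n-1, by omega⟩, ?_⟩
    show (if p.2 _ then (-1:ℝ) else 1) * cornerVec n (a i) (s i) (p.1 (p.1.symm ⟨n-1, by omega⟩)) = 0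
    rw [Equiv.apply_symm_apply]
    have h1 : cornerVec n (a i) (s i) ⟨n-1, by omega⟩ = 0 := by
      unfold cornerVec
      have hne : ¬ ((⟨n-1, by omega⟩ : Fin n) : ℕ) = 0 := by simp; omega
      have hle : ¬ ((⟨n-1, by omega⟩ : Fin n) : ℕ) ≤ s i := by
        simp only []
        have := hsmall i
        omega
      rw [WithLp.ofLp_toLp, if_neg hne, if_neg hle, mul_zero]
    rw [h1, mul_zero]
  -- orbit sums
  have horbH : ∀ i : Fin k, 0 < orbitSum n (a i) (s i) H := by
    intro i
    refine Finset.sum_pos' (fun y _ => by rw [hevalH]; positivity) ?_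
    refine ⟨cornerVec n (a i) (s i), hmem i, ?_⟩
    rw [hevalH]
    have hpos : 0 < cornerVec n (a i) (s i) ⟨0, by omega⟩ ^ 2 := by
      have h0 : cornerVec n (a i) (s i) ⟨0, by omega⟩
          = (Real.sqrt ((a i) ^ 2 + s i))⁻¹ * a i := by
        unfold cornerVec; simp
      rw [h0]
      have hsq : 0 < Real.sqrt ((a i) ^ 2 + s i) := by
        apply Real.sqrt_pos.mpr
        have := ha i
        positivity
      have := ha i
      positivity
    have hsum : cornerVec n (a i) (s i) ⟨0, by omega⟩ ^ 2
        ≤ ∑ j : Fin n, cornerVec n (a i) (s i) j ^ 2 :=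
      Finset.single_le_sum (f := fun j : Fin n => cornerVec n (a i) (s i) j ^ 2)
        (fun j _ => sq_nonneg _) (Finset.mem_univ _)
    exact pow_pos (lt_of_lt_of_le hpos hsum) n
  have horbG : ∀ i : Fin k, orbitSum n (a i) (s i) G = 0 := by
    intro i
    refine Finset.sum_eq_zero fun y hy => ?_
    obtain ⟨j, hj⟩ := hzeroCoord i y hy
    rw [hevalG]
    exact Finset.prod_eq_zero (Finset.mem_univ j) (by rw [hj]; ring)
  -- design applied to H and G
  have hdH := hd H hHdeg
  have hdG := hd G hGdeg
  have hposRHS : 0 < ∑ i, W i * orbitSum n (a i) (s i) H := by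
    refine Finset.sum_pos (fun i _ => mul_pos (hW i) (horbH i)) ?_
    exact Finset.univ_nonempty_iff.mpr (by exact ⟨⟨0, hk⟩⟩)
  rw [← hdH] at hposRHS
  have hzeroRHS : sphereAvg n G = 0 := by
    rw [hdG]
    simp [horbG]
  -- measure-theoretic setup
  set μ : Measure (EuclideanSpace ℝ (Fin n)) := μH[(n : ℝ) - 1] with hμ
  set S := Metric.sphere (0 : EuclideanSpace ℝ (Fin n)) 1 with hSdef
  have hSmeas : MeasurableSet S := Metric.isClosed_sphere.measurableSet
  have hone : ∀ x ∈ S, (∑ i : Fin n, (x i) ^ 2) = 1 := by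
    intro x hx
    rw [mem_sphere_zero_iff_norm, EuclideanSpace.norm_eq] at hx
    have h2 : ∑ i : Fin n, ‖x i‖ ^ 2 = 1 := by
      have hnn : (0:ℝ) ≤ ∑ i : Fin n, ‖x i‖ ^ 2 :=
        Finset.sum_nonneg fun i _ => sq_nonneg _
      nlinarith [Real.sq_sqrt hnn, hx]
    simpa [Real.norm_eq_abs, sq_abs] using h2
  -- compute sphereAvg H
  have havgH : sphereAvg n H = (μ S).toReal⁻¹ * (μ S).toReal := by
    rw [sphereAvg, setAverage_eq]
    have : ∫ x in S, MvPolynomial.eval (fun i => x i) H ∂μ = ∫ x in S, (1:ℝ) ∂μ := by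
      refine setIntegral_congr_fun hSmeas fun x hx => ?_
      rw [hevalH, hone x hx, one_pow]
    rw [hμ, hSdef] at this ⊢
    rw [this, setIntegral_const]
    simp [Measure.real]
  rw [havgH] at hposRHS
  have hμS_toReal_pos : 0 < (μ S).toReal := by
    rcases le_or_gt (μ S).toReal 0 with h | h
    · exfalso
      have h0 : (μ S).toReal = 0 := le_antisymm h ENNReal.toReal_nonneg
      rw [h0] at hposRHS; simp at hposRHS
    · exact h
  have hμS_ne_zero : μ S ≠ 0 := by
    intro h0
    rw [h0] at hμS_toReal_pos; simp at hμS_toReal_pos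
  have hμS_ne_top : μ S ≠ ⊤ := by
    intro h0
    rw [h0] at hμS_toReal_pos; simp at hμS_toReal_pos
  -- the evaluation of G, as a continuous function
  set Gf : EuclideanSpace ℝ (Fin n) → ℝ := fun x => ∏ i : Fin n, (x i) ^ 2 with hGf
  have hGfcont : Continuous Gf := by
    refine continuous_finset_prod _ fun i _ => ?_
    have hcoord : Continuous fun x : EuclideanSpace ℝ (Fin n) => x i :=
      (EuclideanSpace.proj (𝕜 := ℝ) i).continuous
    exact hcoord.pow 2
  -- integral of G over sphere is zero
  have hintG : ∫ x in S, Gf x ∂μ = 0 := by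
    have h1 : sphereAvg n G = (μ S).toReal⁻¹ * ∫ x in S, Gf x ∂μ := by
      rw [sphereAvg, setAverage_eq]
      rw [hμ, hSdef]
      congr 1
      refine setIntegral_congr_fun (by rw [← hSdef]; exact hSmeas) fun x hx => hevalG x
    rw [hzeroRHS] at h1
    have h2 := h1.symm
    rcases mul_eq_zero.mp h2 with h | h
    · exact absurd h (by positivity)
    · exact h
  -- integrability
  haveI : Fact (μ S < ⊤) := ⟨lt_top_iff_ne_top.mpr hμS_ne_top⟩
  have hbound : ∃ C, ∀ x ∈ S, ‖Gf x‖ ≤ C :=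
    (isCompact_sphere 0 1).exists_bound_of_continuousOn hGfcont.continuousOn
  obtain ⟨C, hC⟩ := hbound
  have hintble : Integrable Gf (μ.restrict S) := by
    refine Integrable.mono' (integrable_const C) hGfcont.aestronglyMeasurable ?_
    filter_upwards [ae_restrict_mem hSmeas] with x hx
    exact hC x hx
  -- Gf vanishes a.e. on the sphere
  have hGnonneg : 0 ≤ Gf := fun x => Finset.prod_nonneg fun i _ => sq_nonneg _
  have haezero : Gf =ᵐ[μ.restrict S] 0 :=
    (integral_eq_zero_iff_of_nonneg hGnonneg hintble).mp hintG
  -- the bad set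
  set A : Set (EuclideanSpace ℝ (Fin n)) := {x | Gf x ≠ 0} with hA
  have hAmeas : MeasurableSet A :=
    (hGfcont.measurable (measurableSet_singleton (0:ℝ)).compl : MeasurableSet (Gf ⁻¹' {(0:ℝ)}ᶜ))
  have hA0 : μ (A ∩ S) = 0 := by
    have h := ae_iff.mp haezero
    rw [Measure.restrict_apply' hSmeas] at h
    simpa [hA] using h
  -- covering of the sphere
  obtain ⟨m, rfl⟩ : ∃ m, n = m + 1 := ⟨n - 1, by omega⟩
  have hdcast : ((m + 1 : ℕ) : ℝ) - 1 = (m : ℝ) := by push_cast; ring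
  have hslice : ∀ j : Fin (m+1), μ (S ∩ {y | y j = 0}) = 0 := by
    intro j
    rw [hμ, hdcast, hSdef]
    exact aux_slice_null m (by omega) j
  have hcover : S ⊆ (A ∩ S) ∪ ⋃ j : Fin (m+1), (S ∩ {y | y j = 0}) := by
    intro x hx
    by_cases hGx : Gf x = 0
    · right
      obtain ⟨j, -, hj⟩ := Finset.prod_eq_zero_iff.mp hGx
      have hxj : x j = 0 := by
        have := pow_eq_zero_iff (n := 2) (by norm_num) |>.mp hj
        exact this
      exact Set.mem_iUnion.mpr ⟨j, hx, hxj⟩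
    · left; exact ⟨hGx, hx⟩
  have : μ S = 0 := by
    refine measure_mono_null hcover ?_
    refine measure_union_null hA0 (measure_iUnion_null hslice)
  exact hμS_ne_zero this
end

section
/- Let n ≥ 3. There exist no real a > 0 and integer s with 0 ≤ s ≤ n-1 such that the orbit v_{a,s}^{B_n} is a spherical 9-design. -/
open MeasureTheory
open scoped ENNReal NNReal
set_option maxHeartbeats 1000000

/-- The orbit `v_{a,s}^{B_n}` is an (equi-weighted) spherical `t`-design. -/
def isOrbitDesign (n : ℕ) (a : ℝ) (s : ℕ) (t : ℕ) : Prop :=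
  ∀ f : MvPolynomial (Fin n) ℝ, f.totalDegree ≤ t →
    sphereAvg n f = ((cornerOrbit n a s).card : ℝ)⁻¹ * orbitSum n a s f

lemma euclid_sum_sq_norm {m : ℕ} (y : EuclideanSpace ℝ (Fin m)) :
    ∑ j, (y j) ^ 2 = ‖y‖ ^ 2 := by
  have h := EuclideanSpace.norm_eq y
  have h2 : ‖y‖ ^ 2 = ∑ i, ‖y i‖ ^ 2 := by
    rw [h]; rw [Real.sq_sqrt]; positivity
  rw [h2]; simp [Real.norm_eq_abs, sq_abs]

lemma cap_pos (m : ℕ) (hm : 1 ≤ m) (x0 : EuclideanSpace ℝ (Fin (m + 1)))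
    (hx0 : ‖x0‖ = 1) (hx00 : 0 < x0 0) {r : ℝ} (hr : 0 < r) :
    0 < μH[(m : ℝ)]
      (Metric.ball x0 r ∩ Metric.sphere (0 : EuclideanSpace ℝ (Fin (m + 1))) 1) := by
  haveI : Nonempty (Fin m) := ⟨⟨0, hm⟩⟩
  set E' := EuclideanSpace ℝ (Fin m)
  set π : EuclideanSpace ℝ (Fin (m + 1)) → E' := fun x => WithLp.toLp 2 (fun j : Fin m => x j.succ) with hπdef
  have hπ : LipschitzWith 1 π := by
    apply LipschitzWith.of_dist_le_mul
    intro x y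
    rw [NNReal.coe_one, one_mul, EuclideanSpace.dist_eq, EuclideanSpace.dist_eq]
    apply Real.sqrt_le_sqrt
    rw [Fin.sum_univ_succ]
    exact le_add_of_nonneg_left (by positivity)
  set φ : E' → EuclideanSpace ℝ (Fin (m + 1)) :=
    fun y => WithLp.toLp 2 (Fin.cons (Real.sqrt (1 - ‖y‖ ^ 2)) y.ofLp : Fin (m + 1) → ℝ) with hφdef
  have hφcont : Continuous φ := by
    apply (PiLp.continuous_toLp 2 _).comp
    apply continuous_pi
    intro i
    induction i using Fin.cases with
    | zero =>
        simp only [hφdef, Fin.cons_zero]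
        exact Real.continuous_sqrt.comp (continuous_const.sub (continuous_norm.pow 2))
    | succ j =>
        simp only [hφdef, Fin.cons_succ]
        exact (EuclideanSpace.proj (𝕜 := ℝ) j).continuous
  have hφ_sphere : ∀ y : E', ‖y‖ ≤ 1 →
      φ y ∈ Metric.sphere (0 : EuclideanSpace ℝ (Fin (m + 1))) 1 := by
    intro y hy
    have hy2 : ‖y‖ ^ 2 ≤ 1 := by nlinarith [norm_nonneg y]
    rw [mem_sphere_iff_norm, sub_zero, EuclideanSpace.norm_eq]
    rw [Fin.sum_univ_succ]
    have h0 : ‖(φ y) 0‖ ^ 2 = 1 - ‖y‖ ^ 2 := by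
      simp only [hφdef, WithLp.ofLp_toLp, Fin.cons_zero, Real.norm_eq_abs, sq_abs]
      exact Real.sq_sqrt (by linarith)
    have hs : ∑ j : Fin m, ‖(φ y) j.succ‖ ^ 2 = ‖y‖ ^ 2 := by
      simp only [hφdef, WithLp.ofLp_toLp, Fin.cons_succ, Real.norm_eq_abs, sq_abs]
      exact euclid_sum_sq_norm y
    rw [h0, hs]
    simp
  have hπφ : ∀ y : E', π (φ y) = y := by
    intro y; ext j; simp [hπdef, hφdef, Fin.cons_succ]
  set y0 : E' := π x0 with hy0def
  have hy0sq : ‖y0‖ ^ 2 = 1 - (x0 0) ^ 2 := by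
    have h1 : ∑ i, (x0 i) ^ 2 = 1 := by
      have := euclid_sum_sq_norm (m := m + 1) x0
      rw [hx0] at this; simpa using this
    have h2 : ‖y0‖ ^ 2 = ∑ j : Fin m, (x0 j.succ) ^ 2 := by
      rw [← euclid_sum_sq_norm y0]
    rw [Fin.sum_univ_succ] at h1
    rw [h2]; linarith
  have hy0lt : ‖y0‖ < 1 := by nlinarith [norm_nonneg y0]
  have hφy0 : φ y0 = x0 := by
    ext i
    induction i using Fin.cases with
    | zero =>
        simp only [hφdef, WithLp.ofLp_toLp, Fin.cons_zero, hy0sq]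
        rw [show (1 : ℝ) - (1 - x0 0 ^ 2) = x0 0 ^ 2 by ring]
        exact Real.sqrt_sq hx00.le
    | succ j => simp [hφdef, hπdef, Fin.cons_succ]; rfl
  have hW : IsOpen (φ ⁻¹' Metric.ball x0 r ∩ {y : E' | ‖y‖ < 1}) :=
    (Metric.isOpen_ball.preimage hφcont).inter (isOpen_lt continuous_norm continuous_const)
  have hy0W : y0 ∈ φ ⁻¹' Metric.ball x0 r ∩ {y : E' | ‖y‖ < 1} := by
    constructor
    · simp [Set.mem_preimage, hφy0, Metric.mem_ball, hr]
    · exact hy0lt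
  obtain ⟨ε, hε, hball⟩ := Metric.isOpen_iff.mp hW y0 hy0W
  have hsub : Metric.ball y0 ε ⊆
      π '' (Metric.ball x0 r ∩ Metric.sphere (0 : EuclideanSpace ℝ (Fin (m + 1))) 1) := by
    intro y hy
    have hyW := hball hy
    exact ⟨φ y, ⟨hyW.1, hφ_sphere y hyW.2.le⟩, hπφ y⟩
  have hm0 : (0 : ℝ) ≤ (m : ℝ) := by positivity
  have key : (0 : ℝ≥0∞) < μH[(m : ℝ)] (Metric.ball y0 ε) := by
    set e := WithLp.equiv 2 (Fin m → ℝ)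
    have he : LipschitzWith 1 (⇑e) := PiLp.lipschitzWith_ofLp 2 _
    set δ : ℝ := ε / (m + 1) with hδdef
    have hδ : 0 < δ := by positivity
    have hsub2 : Metric.ball (e y0) δ ⊆ (⇑e) '' Metric.ball y0 ε := by
      intro z hz
      refine ⟨e.symm z, ?_, by simp⟩
      rw [Metric.mem_ball] at hz ⊢
      have hco : ∀ j, dist (z j) (y0 j) < δ := fun j =>
        lt_of_le_of_lt (dist_le_pi_dist z (e y0) j) hz
      have hez : ∀ i, e.symm z i = z i := fun _ => rfl
      have : dist (e.symm z) y0 ≤ Real.sqrt ((m : ℝ) * δ ^ 2) := by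
        rw [EuclideanSpace.dist_eq]
        apply Real.sqrt_le_sqrt
        calc ∑ i, dist (e.symm z i) (y0 i) ^ 2
            ≤ ∑ _i : Fin m, δ ^ 2 := by
              apply Finset.sum_le_sum
              intro i _
              rw [hez i]
              have := (hco i).le
              nlinarith [dist_nonneg (x := z i) (y := y0 i)]
          _ = (m : ℝ) * δ ^ 2 := by simp [mul_comm]
      have hle : Real.sqrt ((m : ℝ) * δ ^ 2) ≤ Real.sqrt (m : ℝ) * δ := by
        rw [Real.sqrt_mul hm0, Real.sqrt_sq hδ.le]
      have hsm : Real.sqrt (m : ℝ) ≤ (m : ℝ) := by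
        have h1 : (1:ℝ) ≤ (m:ℝ) := (Nat.one_le_cast (α := ℝ)).mpr hm
        nlinarith [Real.sq_sqrt hm0, Real.sqrt_nonneg (m:ℝ)]
      have : dist (e.symm z) y0 ≤ (m : ℝ) * δ := by
        calc dist (e.symm z) y0 ≤ Real.sqrt ((m:ℝ) * δ^2) := this
          _ ≤ Real.sqrt (m:ℝ) * δ := hle
          _ ≤ (m:ℝ) * δ := by nlinarith
      calc dist (e.symm z) y0 ≤ (m:ℝ) * δ := this
        _ = (m : ℝ) * (ε / (m+1)) := by rw [hδdef]
        _ < ε := by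
            rw [div_eq_inv_mul]
            have hm1 : (0:ℝ) < (m:ℝ) + 1 := by positivity
            rw [show (m:ℝ) * (((m:ℝ)+1)⁻¹ * ε) = ((m:ℝ)/((m:ℝ)+1)) * ε by ring]
            nlinarith [div_lt_one hm1 |>.mpr (by linarith : (m:ℝ) < (m:ℝ)+1)]
    have hpi : (μH[(m : ℝ)] : Measure (Fin m → ℝ)) = volume := by
      have := hausdorffMeasure_pi_real (ι := Fin m)
      rwa [Fintype.card_fin] at this
    have hpos : (0 : ℝ≥0∞) < μH[(m : ℝ)] (Metric.ball (e y0) δ) := by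
      rw [hpi]
      exact Metric.measure_ball_pos volume _ hδ
    calc (0:ℝ≥0∞) < μH[(m : ℝ)] (Metric.ball (e y0) δ) := hpos
      _ ≤ μH[(m : ℝ)] ((⇑e) '' Metric.ball y0 ε) := measure_mono hsub2
      _ ≤ (1:ℝ≥0∞) ^ (m:ℝ) * μH[(m : ℝ)] (Metric.ball y0 ε) :=
          he.hausdorffMeasure_image_le hm0 _
      _ = μH[(m : ℝ)] (Metric.ball y0 ε) := by simp
  calc (0:ℝ≥0∞) < μH[(m : ℝ)] (Metric.ball y0 ε) := key
    _ ≤ μH[(m : ℝ)] (π '' (Metric.ball x0 r ∩ Metric.sphere 0 1)) := measure_mono hsub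
    _ ≤ (1:ℝ≥0∞) ^ (m:ℝ) * μH[(m : ℝ)] (Metric.ball x0 r ∩ Metric.sphere 0 1) :=
        hπ.hausdorffMeasure_image_le hm0 _
    _ = μH[(m : ℝ)] (Metric.ball x0 r ∩ Metric.sphere 0 1) := by simp


/-- There are no single-orbit 9-designs. -/
theorem no_single_orbit_nine_design (n : ℕ) (hn : 3 ≤ n) :
    ¬ ∃ (a : ℝ) (s : ℕ), 0 < a ∧ s ≤ n - 1 ∧ isOrbitDesign n a s 9 := by
  rintro ⟨a, s, ha, hs, hdes⟩
  classical
  obtain ⟨m, rfl⟩ : ∃ m, n = m + 1 := ⟨n - 1, by omega⟩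
  set v : EuclideanSpace ℝ (Fin (m + 1)) := cornerVec (m + 1) a s with hv
  set p4 : MvPolynomial (Fin (m + 1)) ℝ := ∑ i, (MvPolynomial.X i) ^ 4 with hp4
  set c : ℝ := ∑ i, (v i) ^ 4 with hc
  set S := Metric.sphere (0 : EuclideanSpace ℝ (Fin (m + 1))) 1 with hS
  set μ : Measure (EuclideanSpace ℝ (Fin (m + 1))) := μH[((m + 1 : ℕ) : ℝ) - 1] with hμ
  have heval : ∀ x : EuclideanSpace ℝ (Fin (m + 1)),
      MvPolynomial.eval (fun i => x i) p4 = ∑ i, (x i) ^ 4 := by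
    intro x; simp [hp4]
  -- the orbit value of p4
  have horb : ∀ y ∈ cornerOrbit (m + 1) a s, (∑ i, (y i) ^ 4) = c := by
    intro y hy
    simp only [cornerOrbit, Finset.mem_image, Finset.mem_univ, true_and] at hy
    obtain ⟨p, rfl⟩ := hy
    have h1 : ∀ i : Fin (m + 1),
        ((if p.2 i then (-1 : ℝ) else 1) * cornerVec (m + 1) a s (p.1 i)) ^ 4
          = (v (p.1 i)) ^ 4 := by
      intro i
      have hvv : cornerVec (m + 1) a s (p.1 i) = v (p.1 i) := rfl
      have he4 : Even 4 := ⟨2, rfl⟩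
      rcases Bool.eq_false_or_eq_true (p.2 i) with h | h <;>
        simp [h, hvv, he4.neg_pow]
    calc (∑ i, ((if p.2 i then (-1 : ℝ) else 1) * cornerVec (m + 1) a s (p.1 i)) ^ 4)
        = ∑ i, (v (p.1 i)) ^ 4 := Finset.sum_congr rfl fun i _ => h1 i
      _ = ∑ j, (v j) ^ 4 := Equiv.sum_comp p.1 fun j => (v j) ^ 4
      _ = c := rfl
  -- orbit is nonempty
  have hne : (cornerOrbit (m + 1) a s).Nonempty := by
    unfold cornerOrbit
    exact @Finset.Nonempty.image _ _ (Classical.decEq _) _ ⟨(1, fun _ => false), Finset.mem_univ _⟩ _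
  have hcard : (0 : ℝ) < (cornerOrbit (m + 1) a s).card := by
    exact_mod_cast Finset.card_pos.mpr hne
  -- design at f = 1 : total measure is finite and positive
  have hμS : 0 < (μ S).toReal := by
    have h1 := hdes 1 (by simp)
    have h2 : orbitSum (m + 1) a s 1 = (cornerOrbit (m + 1) a s).card := by
      simp [orbitSum, map_one]
    have h3 : sphereAvg (m + 1) 1 = (μ S).toReal⁻¹ * (μ S).toReal := by
      rw [sphereAvg]
      simp only [map_one]
      rw [setAverage_eq, setIntegral_const]
      simp [hμ, hS]
      rfl
    rw [h3, h2] at h1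
    rw [inv_mul_cancel₀ (ne_of_gt hcard)] at h1
    rcases eq_or_lt_of_le (ENNReal.toReal_nonneg (a := μ S)) with h | h
    · rw [← h] at h1; simp at h1
    · exact h
  have hμSfin : μ S < ⊤ := (ENNReal.toReal_pos_iff.mp hμS).2
  -- design at Q = (p4 - C c)^2
  set Q : MvPolynomial (Fin (m + 1)) ℝ := (p4 - MvPolynomial.C c) ^ 2 with hQ
  have hQdeg : Q.totalDegree ≤ 9 := by
    have hp4deg : p4.totalDegree ≤ 4 := by
      rw [hp4]
      refine le_trans (MvPolynomial.totalDegree_finset_sum _ _) ?_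
      apply Finset.sup_le
      intro i _
      rw [MvPolynomial.totalDegree_X_pow]
    have hsub : (p4 - MvPolynomial.C c).totalDegree ≤ 4 := by
      rw [sub_eq_add_neg]
      refine le_trans (MvPolynomial.totalDegree_add _ _) ?_
      rw [MvPolynomial.totalDegree_neg, MvPolynomial.totalDegree_C]
      simp [hp4deg]
    calc Q.totalDegree ≤ 2 * (p4 - MvPolynomial.C c).totalDegree :=
          MvPolynomial.totalDegree_pow _ _
      _ ≤ 2 * 4 := by omega
      _ ≤ 9 := by omega
  have hQeval : ∀ x : EuclideanSpace ℝ (Fin (m + 1)),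
      MvPolynomial.eval (fun i => x i) Q = ((∑ i, (x i) ^ 4) - c) ^ 2 := by
    intro x
    rw [hQ, map_pow, map_sub, MvPolynomial.eval_C, heval]
  set g : EuclideanSpace ℝ (Fin (m + 1)) → ℝ := fun x => ((∑ i, (x i) ^ 4) - c) ^ 2 with hg
  have hgcont : Continuous g := by
    apply Continuous.pow
    apply Continuous.sub _ continuous_const
    exact continuous_finset_sum _ fun i _ => ((EuclideanSpace.proj (𝕜 := ℝ) i).continuous).pow 4
  have hSmeas : MeasurableSet S := Metric.isClosed_sphere.measurableSet
  -- integral of g over the sphere is zero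
  have hint0 : ∫ x in S, g x ∂μ = 0 := by
    have h1 := hdes Q hQdeg
    have h2 : orbitSum (m + 1) a s Q = 0 := by
      rw [orbitSum]
      apply Finset.sum_eq_zero
      intro y hy
      rw [hQeval, horb y hy, sub_self]
      ring
    have h3 : sphereAvg (m + 1) Q = (μ S).toReal⁻¹ * ∫ x in S, g x ∂μ := by
      rw [sphereAvg]
      simp_rw [show ∀ x : EuclideanSpace ℝ (Fin (m + 1)),
        MvPolynomial.eval (fun i => x i) Q = g x from fun x => hQeval x]
      rw [setAverage_eq]
      simp [hμ, hS]
      exact Or.inl rfl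
    rw [h3, h2, mul_zero] at h1
    have hinv : (μ S).toReal⁻¹ ≠ 0 := by positivity
    field_simp at h1
    simpa using h1
  -- g is integrable on the sphere
  have hintg : IntegrableOn g S μ := by
    obtain ⟨C, hC⟩ := (isCompact_sphere (0 : EuclideanSpace ℝ (Fin (m + 1))) 1)
      |>.exists_bound_of_continuousOn hgcont.continuousOn
    refine ⟨hgcont.aestronglyMeasurable, ?_⟩
    apply HasFiniteIntegral.restrict_of_bounded (C := C) hμSfin
    exact (ae_restrict_iff' hSmeas).mpr (ae_of_all _ hC)
  -- hence g = 0 a.e. on the sphere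
  have hU : IsOpen {x : EuclideanSpace ℝ (Fin (m + 1)) | g x ≠ 0} :=
    isOpen_ne_fun hgcont continuous_const
  have hgnull : μ ({x | g x ≠ 0} ∩ S) = 0 := by
    have hae := (integral_eq_zero_iff_of_nonneg (fun x => sq_nonneg _) hintg).mp hint0
    have hae' : ∀ᵐ x ∂(μ.restrict S), g x = 0 := by
      filter_upwards [hae] with x hx
      exact hx
    have h4 : (μ.restrict S) {x | ¬ g x = 0} = 0 := ae_iff.mp hae'
    rwa [Measure.restrict_apply hU.measurableSet] at h4
  -- choose a point on the sphere where g ≠ 0 and the first coordinate is positive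
  have hx0 : ∃ x0 : EuclideanSpace ℝ (Fin (m + 1)), ‖x0‖ = 1 ∧ 0 < x0 0 ∧ g x0 ≠ 0 := by
    by_cases hc1 : c = 1
    · -- uniform vector: ∑ x_i^4 = 1/(m+1) ≠ 1 = c
      set N : ℝ := (m : ℝ) + 1 with hN
      have hN0 : (0 : ℝ) < N := by positivity
      have hsq : Real.sqrt N ^ 2 = N := Real.sq_sqrt hN0.le
      have hs0 : (0 : ℝ) < Real.sqrt N := Real.sqrt_pos.mpr hN0
      refine ⟨WithLp.toLp 2 (fun _ => (Real.sqrt N)⁻¹), ?_, by simpa using hs0, ?_⟩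
      · rw [EuclideanSpace.norm_eq]
        simp only [WithLp.ofLp_toLp]
        have h5 : ∑ _i : Fin (m + 1), ‖(Real.sqrt N)⁻¹‖ ^ 2 = 1 := by
          rw [Finset.sum_const, Finset.card_univ, Fintype.card_fin]
          rw [Real.norm_eq_abs, sq_abs, nsmul_eq_mul, inv_pow, hsq]
          rw [hN]
          push_cast
          field_simp
        rw [h5, Real.sqrt_one]
      · have hsum : ∑ _i : Fin (m + 1), ((Real.sqrt N)⁻¹ : ℝ) ^ 4 = N⁻¹ := by
          rw [Finset.sum_const, Finset.card_univ, Fintype.card_fin, nsmul_eq_mul]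
          rw [show ((Real.sqrt N)⁻¹ : ℝ) ^ 4 = ((Real.sqrt N ^ 2) ^ 2)⁻¹ by ring]
          rw [hsq, hN]
          push_cast
          field_simp
        simp only [hg, WithLp.ofLp_toLp, hsum, hc1]
        have h3N : (3 : ℝ) ≤ N := by
          rw [hN]; exact_mod_cast (by omega : (3:ℕ) ≤ m + 1)
        have hne1 : N⁻¹ - 1 ≠ 0 := by
          have hlt : N⁻¹ < 1 := by
            rw [inv_lt_one_iff₀]; right; linarith
          intro h; nlinarith
        exact pow_ne_zero _ hne1
    · refine ⟨EuclideanSpace.single (0 : Fin (m + 1)) (1 : ℝ), ?_, ?_, ?_⟩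
      · rw [EuclideanSpace.norm_single]; norm_num
      · rw [EuclideanSpace.single_apply]; norm_num
      · have hsum : ∑ i : Fin (m + 1), (EuclideanSpace.single (0 : Fin (m + 1)) (1 : ℝ) i) ^ 4
            = 1 := by
          simp [EuclideanSpace.single_apply, ite_pow]
        simp only [hg, hsum]
        exact pow_ne_zero _ (sub_ne_zero.mpr (fun h => hc1 h.symm))
  obtain ⟨x0, hx0n, hx00, hgx0⟩ := hx0
  have hx0U : x0 ∈ {x : EuclideanSpace ℝ (Fin (m + 1)) | g x ≠ 0} := hgx0
  obtain ⟨r, hr, hball⟩ := Metric.isOpen_iff.mp hU x0 hx0U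
  -- cap positivity
  have hcap : 0 < μ (Metric.ball x0 r ∩ S) := by
    have hexp : ((m + 1 : ℕ) : ℝ) - 1 = (m : ℝ) := by push_cast; ring
    rw [hμ, hS, hexp]
    exact cap_pos m (by omega) x0 hx0n hx00 hr
  have hzero : μ (Metric.ball x0 r ∩ S) = 0 := by
    apply le_antisymm _ (by simp)
    rw [← hgnull]
    exact measure_mono (Set.inter_subset_inter_left _ hball)
  rw [hzero] at hcap
  exact lt_irrefl _ hcap
end
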